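/- For every integer r ≥ 2 and every nonnegative integer s, one has Σ_{k=0}^{r} (−r)_k (1+k)_s / ((2−2r)_k · s!) = ((2r−1)/(r−1)) · (2r)_s / (r)_s, where the terms with (2−2r)_k = 0 do not occur since (−r)_k/(2−2r)_k is interpreted as the product Π_{j=0}^{k−1} (−r+j)/(2−2r+j). -/

import Mathlib

/-- The Pochhammer symbol (rising factorial) `(a)ₖ = a(a+1)⋯(a+k−1)`. -/
noncomputable def poch (a : ℂ) (k : ℕ) : ℂ := (ascPochhammer ℂ k).eval a

lemma poch_zero (a : ℂ) : poch a 0 = 1 := by simp [poch]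

lemma poch_succ (a : ℂ) (n : ℕ) : poch a (n + 1) = poch a n * (a + n) := by
  simp [poch, ascPochhammer_succ_right]

lemma poch_succ_left (a : ℂ) (n : ℕ) : poch a (n + 1) = a * poch (a + 1) n := by
  simp [poch, ascPochhammer_succ_left, Polynomial.eval_comp]

lemma poch_prod (a : ℂ) (n : ℕ) : poch a n = ∏ j ∈ Finset.range n, (a + j) := by
  induction n with
  | zero => simp [poch]
  | succ n ih => rw [poch_succ, Finset.prod_range_succ, ih]

lemma poch_ne_zero {a : ℂ} {n : ℕ} (h : ∀ j < n, a + (j : ℂ) ≠ 0) : poch a n ≠ 0 := by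
  rw [poch_prod]
  exact Finset.prod_ne_zero_iff.2 fun j hj => h j (Finset.mem_range.1 hj)

/-- Chu–Vandermonde. -/
lemma chu : ∀ (n : ℕ) (b c : ℂ), (∀ j < n, c + (j : ℂ) ≠ 0) →
    ∑ k ∈ Finset.range (n + 1), (-1 : ℂ) ^ k * (n.choose k) * poch b k / poch c k
      = poch (c - b) n / poch c n := by
  intro n
  induction n with
  | zero => intro b c _; simp [poch]
  | succ n ih =>
    intro b c hne
    have hc : c ≠ 0 := by simpa using hne 0 (Nat.succ_pos n)
    have h1 : ∀ j < n, c + (j : ℂ) ≠ 0 := fun j hj => hne j (hj.trans (Nat.lt_succ_self n))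
    have h2 : ∀ j < n, (c + 1) + (j : ℂ) ≠ 0 := by
      intro j hj
      have := hne (j + 1) (by omega)
      push_cast at this ⊢
      intro h; exact this (by linear_combination h)
    have key : ∀ k ∈ Finset.range (n + 1),
        (-1 : ℂ) ^ (k+1) * ((n+1).choose (k+1)) * poch b (k+1) / poch c (k+1)
        = (-1 : ℂ) ^ (k+1) * (n.choose (k+1)) * poch b (k+1) / poch c (k+1)
          + (-(b / c)) * ((-1 : ℂ) ^ k * (n.choose k) * poch (b+1) k / poch (c+1) k) := by
      intro k _
      rw [Nat.choose_succ_succ' n k]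
      push_cast
      rw [poch_succ_left b, poch_succ_left c]
      have hQ : poch (c + 1) k ≠ 0 := by
        apply poch_ne_zero
        intro j hj
        have := hne (j + 1) (by simp at *; omega)
        push_cast at this ⊢
        intro h; apply this; linear_combination h
      field_simp
      ring
    have hP : poch c n ≠ 0 := poch_ne_zero h1
    have hQ : poch (c + 1) n ≠ 0 := poch_ne_zero h2
    have hcn : c + (n : ℂ) ≠ 0 := hne n (Nat.lt_succ_self n)
    have E : c * poch (c + 1) n = poch c n * (c + n) := by
      rw [← poch_succ_left, poch_succ]
    have hA : (∑ k ∈ Finset.range (n + 1),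
          (-1 : ℂ) ^ (k+1) * (n.choose (k+1)) * poch b (k+1) / poch c (k+1)) + 1
        = poch (c - b) n / poch c n := by
      calc _ = ∑ k ∈ Finset.range (n + 2),
              (-1 : ℂ) ^ k * (n.choose k) * poch b k / poch c k := by
            rw [Finset.sum_range_succ'
              (fun k => (-1 : ℂ) ^ k * (n.choose k) * poch b k / poch c k) (n+1)]
            simp [poch]
        _ = ∑ k ∈ Finset.range (n + 1),
              (-1 : ℂ) ^ k * (n.choose k) * poch b k / poch c k := by
            rw [Finset.sum_range_succ]
            simp [Nat.choose_succ_self]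
        _ = _ := ih b c h1
    calc ∑ k ∈ Finset.range (n + 2),
          (-1 : ℂ) ^ k * ((n+1).choose k) * poch b k / poch c k
        = (∑ k ∈ Finset.range (n + 1),
            (-1 : ℂ) ^ (k+1) * ((n+1).choose (k+1)) * poch b (k+1) / poch c (k+1)) + 1 := by
          rw [Finset.sum_range_succ'
            (fun k => (-1 : ℂ) ^ k * ((n+1).choose k) * poch b k / poch c k) (n+1)]
          simp [poch]
      _ = (∑ k ∈ Finset.range (n + 1),
            ((-1 : ℂ) ^ (k+1) * (n.choose (k+1)) * poch b (k+1) / poch c (k+1)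
              + (-(b / c)) * ((-1 : ℂ) ^ k * (n.choose k) * poch (b+1) k / poch (c+1) k))) + 1 := by
          rw [Finset.sum_congr rfl key]
      _ = ((∑ k ∈ Finset.range (n + 1),
            (-1 : ℂ) ^ (k+1) * (n.choose (k+1)) * poch b (k+1) / poch c (k+1)) + 1)
          + (-(b / c)) * (∑ k ∈ Finset.range (n + 1),
            (-1 : ℂ) ^ k * (n.choose k) * poch (b+1) k / poch (c+1) k) := by
          rw [Finset.sum_add_distrib, ← Finset.mul_sum]; ring
      _ = poch (c - b) n / poch c n
          + (-(b / c)) * (poch ((c+1) - (b+1)) n / poch (c+1) n) := by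
          rw [hA, ih (b+1) (c+1) h2]
      _ = poch (c - b) (n+1) / poch c (n+1) := by
          rw [show (c+1) - (b+1) = c - b by ring, poch_succ (c-b), poch_succ c]
          have hQ' : poch (c + 1) n = poch c n * (c + n) / c := by
            rw [eq_div_iff hc]; linear_combination E
          rw [hQ']
          field_simp
          ring

lemma poch_neg_nat (m k : ℕ) (h : k ≤ m) :
    poch (-(m : ℂ)) k = (-1) ^ k * (m.descFactorial k : ℂ) := by
  rw [poch_prod]
  have h1 : ∀ j ∈ Finset.range k, (-(m : ℂ) + j) = (-1) * (((m - j : ℕ) : ℂ)) := by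
    intro j hj
    have hj' : j ≤ m := le_trans (Nat.le_of_lt (Finset.mem_range.1 hj)) h
    push_cast [Nat.cast_sub hj']
    ring
  rw [Finset.prod_congr rfl h1, Finset.prod_mul_distrib, Finset.prod_const,
    ← Nat.cast_prod, ← Nat.descFactorial_eq_prod_range]
  simp

theorem finite_sum_ratio_two_r_minus_two (r s : ℕ) (hr : 2 ≤ r) :
    ∑ k ∈ Finset.range (r + 1),
      (∏ j ∈ Finset.range k, ((-(r : ℂ) + j) / (2 - 2 * r + j))) *
        poch (1 + k) s / (s.factorial : ℂ) =
    ((2 * (r : ℂ) - 1) / ((r : ℂ) - 1)) * (poch (2 * r) s / poch r s) := by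
  have hne : ∀ j < r, (2 - 2 * (r : ℂ)) + (j : ℂ) ≠ 0 := by
    intro j hj
    have e : (2 - 2 * (r : ℂ)) + (j : ℂ) = (-1) * (((2 * r - 2 - j : ℕ) : ℂ)) := by
      push_cast [Nat.cast_sub (by omega : j ≤ 2 * r - 2), Nat.cast_sub (by omega : 2 ≤ 2 * r)]
      ring
    rw [e]
    simp only [neg_mul, one_mul, neg_ne_zero, Nat.cast_ne_zero]
    omega
  have hterm : ∀ k ∈ Finset.range (r + 1),
      (∏ j ∈ Finset.range k, ((-(r : ℂ) + j) / (2 - 2 * r + j))) *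
        poch (1 + k) s / (s.factorial : ℂ)
      = (-1 : ℂ) ^ k * (r.choose k) * poch ((s : ℂ) + 1) k / poch (2 - 2 * (r : ℂ)) k := by
    intro k hk
    have hkr : k ≤ r := by simpa [Nat.lt_succ_iff] using hk
    have hprod : (∏ j ∈ Finset.range k, ((-(r : ℂ) + j) / (2 - 2 * r + j)))
        = poch (-(r : ℂ)) k / poch (2 - 2 * (r : ℂ)) k := by
      rw [Finset.prod_div_distrib, poch_prod, poch_prod]
    rw [hprod, poch_neg_nat r k hkr]
    have e1 : (k.factorial : ℂ) * poch ((k : ℂ) + 1) s = ((k + s).factorial : ℂ) := by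
      simpa [poch] using factorial_mul_ascPochhammer ℂ k s
    have e2 : (s.factorial : ℂ) * poch ((s : ℂ) + 1) k = ((s + k).factorial : ℂ) := by
      simpa [poch] using factorial_mul_ascPochhammer ℂ s k
    have hpc : poch (2 - 2 * (r : ℂ)) k ≠ 0 :=
      poch_ne_zero (fun j hj => hne j (lt_of_lt_of_le hj hkr))
    have hk0 : (k.factorial : ℂ) ≠ 0 := by exact_mod_cast k.factorial_ne_zero
    have hs0 : (s.factorial : ℂ) ≠ 0 := by exact_mod_cast s.factorial_ne_zero
    rw [show (1 : ℂ) + (k : ℂ) = (k : ℂ) + 1 by ring,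
      Nat.descFactorial_eq_factorial_mul_choose]
    have hks : ((k + s).factorial : ℂ) = ((s + k).factorial : ℂ) := by rw [Nat.add_comm]
    field_simp
    linear_combination (norm := (push_cast; ring1)) ((r.choose k : ℂ) * (poch (2 * (1 - (r:ℂ))) k)⁻¹) * e1
      - ((r.choose k : ℂ) * (poch (2 * (1 - (r:ℂ))) k)⁻¹) * e2
      + ((r.choose k : ℂ) * (poch (2 * (1 - (r:ℂ))) k)⁻¹) * hks
  rw [Finset.sum_congr rfl hterm, chu r ((s : ℂ) + 1) (2 - 2 * (r : ℂ)) hne]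
  -- final numeric computation
  set m : ℕ := 2 * r - 1 + s with hm
  have e3 : (2 - 2 * (r : ℂ)) - ((s : ℂ) + 1) = -(m : ℂ) := by
    rw [hm]; push_cast [Nat.cast_sub (by omega : 1 ≤ 2 * r)]; ring
  have e4 : (2 - 2 * (r : ℂ)) = -(((2 * r - 2 : ℕ)) : ℂ) := by
    push_cast [Nat.cast_sub (by omega : 2 ≤ 2 * r)]; ring
  rw [e3, e4, poch_neg_nat m r (by omega), poch_neg_nat (2 * r - 2) r (by omega)]
  have e5 : ((2 * r - 1).factorial : ℂ) * poch (2 * (r : ℂ)) s = (m.factorial : ℂ) := by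
    have := factorial_mul_ascPochhammer ℂ (2 * r - 1) s
    rw [show (((2 * r - 1 : ℕ) : ℂ) + 1) = 2 * (r : ℂ) by
      push_cast [Nat.cast_sub (by omega : 1 ≤ 2 * r)]; ring] at this
    simpa [poch, hm] using this
  have e6 : ((r - 1).factorial : ℂ) * poch ((r : ℂ)) s = ((r - 1 + s).factorial : ℂ) := by
    have := factorial_mul_ascPochhammer ℂ (r - 1) s
    rw [show (((r - 1 : ℕ) : ℂ) + 1) = (r : ℂ) by
      push_cast [Nat.cast_sub (by omega : 1 ≤ r)]; ring] at this
    simpa [poch] using this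
  -- nonzero facts
  have hD2 : ((2 * r - 2).descFactorial r : ℂ) ≠ 0 := by
    rw [Nat.cast_ne_zero]
    intro h0
    have := Nat.descFactorial_eq_zero_iff_lt.1 h0
    omega
  have hr1 : ((r : ℂ) - 1) ≠ 0 := by
    rw [show ((r : ℂ) - 1) = (((r - 1 : ℕ)) : ℂ) by
      push_cast [Nat.cast_sub (by omega : 1 ≤ r)]; ring]
    rw [Nat.cast_ne_zero]; omega
  have hps : poch ((r : ℂ)) s ≠ 0 := by
    intro h0
    rw [h0, mul_zero] at e6
    exact (Nat.cast_ne_zero.2 (r - 1 + s).factorial_ne_zero) e6.symm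
  have hf1 : (((2 * r - 1).factorial : ℕ) : ℂ) ≠ 0 := by
    exact_mod_cast (2 * r - 1).factorial_ne_zero
  have hf2 : (((r - 1).factorial : ℕ) : ℂ) ≠ 0 := by
    exact_mod_cast (r - 1).factorial_ne_zero
  have hp2r : poch (2 * (r : ℂ)) s = (m.factorial : ℂ) / ((2 * r - 1).factorial : ℂ) := by
    rw [eq_div_iff hf1]; linear_combination e5
  have hpr : poch ((r : ℂ)) s = ((r - 1 + s).factorial : ℂ) / ((r - 1).factorial : ℂ) := by
    rw [eq_div_iff hf2]; linear_combination e6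
  rw [hp2r, hpr]
  -- cast natural multiplicative identities
  have A : ((r - 1 + s).factorial * m.descFactorial r : ℕ) = m.factorial := by
    have := Nat.factorial_mul_descFactorial (show r ≤ m by omega)
    rwa [show m - r = r - 1 + s by omega] at this
  have B : ((r - 2).factorial * (2 * r - 2).descFactorial r : ℕ) = (2 * r - 2).factorial := by
    have := Nat.factorial_mul_descFactorial (show r ≤ 2 * r - 2 by omega)
    rwa [show 2 * r - 2 - r = r - 2 by omega] at this
  have C : ((2 * r - 1).factorial : ℕ) = (2 * r - 1) * (2 * r - 2).factorial := by
    rw [show 2 * r - 1 = (2 * r - 2) + 1 by omega, Nat.factorial_succ]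
  have D : ((r - 1).factorial : ℕ) = (r - 1) * (r - 2).factorial := by
    rw [show r - 1 = (r - 2) + 1 by omega, Nat.factorial_succ]
  have A' : ((r - 1 + s).factorial : ℂ) * (m.descFactorial r : ℂ) = (m.factorial : ℂ) := by
    exact_mod_cast congrArg (Nat.cast : ℕ → ℂ) A
  have B' : ((r - 2).factorial : ℂ) * ((2 * r - 2).descFactorial r : ℂ)
      = ((2 * r - 2).factorial : ℂ) := by
    exact_mod_cast congrArg (Nat.cast : ℕ → ℂ) B
  have C' : ((2 * r - 1).factorial : ℂ) = ((2 * r - 1 : ℕ) : ℂ) * ((2 * r - 2).factorial : ℂ) := by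
    exact_mod_cast congrArg (Nat.cast : ℕ → ℂ) C
  have D' : ((r - 1).factorial : ℂ) = ((r - 1 : ℕ) : ℂ) * ((r - 2).factorial : ℂ) := by
    exact_mod_cast congrArg (Nat.cast : ℕ → ℂ) D
  have c1 : ((2 * r - 1 : ℕ) : ℂ) = 2 * (r : ℂ) - 1 := by
    push_cast [Nat.cast_sub (by omega : 1 ≤ 2 * r)]; ring
  have c2 : ((r - 1 : ℕ) : ℂ) = (r : ℂ) - 1 := by
    push_cast [Nat.cast_sub (by omega : 1 ≤ r)]; ring
  have hrs : (((r - 1 + s).factorial : ℕ) : ℂ) ≠ 0 := by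
    exact_mod_cast (r - 1 + s).factorial_ne_zero
  have hneg : ((-1 : ℂ)) ^ r ≠ 0 := pow_ne_zero _ (by norm_num)
  field_simp
  rw [← c1, ← c2]
  have key2 : m.descFactorial r * ((r - 1) * ((2 * r - 1).factorial * (r - 1 + s).factorial))
      = (2 * r - 1) * (m.factorial * (r - 1).factorial) * ((2 * r - 2).descFactorial r) := by
    rw [C, D, ← A, ← B]
    ring
  have key2' : (m.descFactorial r : ℂ) * (((r - 1 : ℕ) : ℂ) *
        (((2 * r - 1).factorial : ℂ) * ((r - 1 + s).factorial : ℂ)))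
      = ((2 * r - 1 : ℕ) : ℂ) * ((m.factorial : ℂ) * ((r - 1).factorial : ℂ)) *
        (((2 * r - 2).descFactorial r : ℂ)) := by
    exact_mod_cast congrArg (Nat.cast : ℕ → ℂ) key2
  linear_combination key2'
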